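/- Let κ be a singular cardinal (an infinite cardinal with cf(κ) < κ) and X a topological space such that cf(κ) is not a caliber* for X. Then there exists a topological space Y and a dense topological embedding of X into Y (i.e., Y is an extension of X) such that κ is not a caliber* for Y. -/

import Mathlib

open Cardinal Set

universe u

/-- `κ` is a caliber for `X`: every κ-indexed family of non-empty open sets
(repetitions allowed) has a κ-sized subfamily with non-empty intersection. -/
def IsCaliber (X : Type u) [TopologicalSpace X] (κ : Cardinal.{u}) : Prop :=
  ∀ {ι : Type u} (U : ι → Set X), #ι = κ → (∀ i, IsOpen (U i)) → (∀ i, (U i).Nonempty) →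
    ∃ J : Set ι, #J = κ ∧ (⋂ i ∈ J, U i).Nonempty

/-- `κ` is a precaliber for `X`: every κ-indexed family of non-empty open sets
has a κ-sized subfamily which is centered. -/
def IsPrecaliber (X : Type u) [TopologicalSpace X] (κ : Cardinal.{u}) : Prop :=
  ∀ {ι : Type u} (U : ι → Set X), #ι = κ → (∀ i, IsOpen (U i)) → (∀ i, (U i).Nonempty) →
    ∃ J : Set ι, #J = κ ∧
      ∀ s : Finset ι, ↑s ⊆ J → s.Nonempty → (⋂ i ∈ s, U i).Nonempty

/-- `κ` is a weak precaliber for `X`: every κ-indexed family of non-empty open sets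
has a κ-sized subfamily which is linked. -/
def IsWeakPrecaliber (X : Type u) [TopologicalSpace X] (κ : Cardinal.{u}) : Prop :=
  ∀ {ι : Type u} (U : ι → Set X), #ι = κ → (∀ i, IsOpen (U i)) → (∀ i, (U i).Nonempty) →
    ∃ J : Set ι, #J = κ ∧ ∀ i ∈ J, ∀ j ∈ J, (U i ∩ U j).Nonempty

/-- `κ` is a caliber* for `X`: every family of non-empty open sets of cardinality `κ`
has a subfamily of cardinality `κ` with non-empty intersection. -/
def IsCaliberStar (X : Type u) [TopologicalSpace X] (κ : Cardinal.{u}) : Prop :=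
  ∀ 𝒰 : Set (Set X), #𝒰 = κ → (∀ U ∈ 𝒰, IsOpen U) → (∀ U ∈ 𝒰, U.Nonempty) →
    ∃ 𝒱 ⊆ 𝒰, #𝒱 = κ ∧ (⋂₀ 𝒱).Nonempty

/-- `κ` is a precaliber* for `X`: every family of non-empty open sets of cardinality `κ`
has a centered subfamily of cardinality `κ`. -/
def IsPrecaliberStar (X : Type u) [TopologicalSpace X] (κ : Cardinal.{u}) : Prop :=
  ∀ 𝒰 : Set (Set X), #𝒰 = κ → (∀ U ∈ 𝒰, IsOpen U) → (∀ U ∈ 𝒰, U.Nonempty) →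
    ∃ 𝒱 ⊆ 𝒰, #𝒱 = κ ∧
      ∀ s : Finset (Set X), ↑s ⊆ 𝒱 → s.Nonempty → (⋂₀ (↑s : Set (Set X))).Nonempty

/-- `κ` is a weak precaliber* for `X`: every family of non-empty open sets of
cardinality `κ` has a linked subfamily of cardinality `κ`. -/
def IsWeakPrecaliberStar (X : Type u) [TopologicalSpace X] (κ : Cardinal.{u}) : Prop :=
  ∀ 𝒰 : Set (Set X), #𝒰 = κ → (∀ U ∈ 𝒰, IsOpen U) → (∀ U ∈ 𝒰, U.Nonempty) →
    ∃ 𝒱 ⊆ 𝒰, #𝒱 = κ ∧ ∀ U ∈ 𝒱, ∀ V ∈ 𝒱, (U ∩ V).Nonempty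

/-- `o X` : the number of open subsets of `X`. -/
def oCard (X : Type u) [TopologicalSpace X] : Cardinal.{u} :=
  #{U : Set X | IsOpen U}

/-- A cellular family: a pairwise disjoint collection of non-empty open sets. -/
def IsCellularFamily (X : Type u) [TopologicalSpace X] (𝒰 : Set (Set X)) : Prop :=
  (∀ U ∈ 𝒰, IsOpen U) ∧ (∀ U ∈ 𝒰, U.Nonempty) ∧ 𝒰.Pairwise Disjoint

theorem stmt7 (κ : Cardinal.{u}) (hκ : ℵ₀ ≤ κ) (hsing : κ.ord.cof < κ)
    (X : Type u) [TopologicalSpace X] (h : ¬ IsCaliberStar X κ.ord.cof) :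
    ∃ (Y : Type u) (_ : TopologicalSpace Y) (e : X → Y),
      IsDenseEmbedding e ∧ ¬ IsCaliberStar Y κ := by
  classical
  -- Extract a witness family from the failure of caliber* for cf κ.
  rw [IsCaliberStar] at h
  push_neg at h
  obtain ⟨𝒰, h𝒰card, h𝒰open, h𝒰ne, hbad⟩ := h
  -- The set of new points: the order type of κ.
  set D := κ.ord.ToType with hD
  -- A cofinal subset of D of cardinality cf κ.
  obtain ⟨S, hSunb, hScard⟩ := Order.exists_cof_eq D
  rw [Ordinal.cof_toType] at hScard
  have hS𝒰 : #S = #𝒰 := by rw [hScard, h𝒰card]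
  obtain ⟨e⟩ := Cardinal.eq.mp hS𝒰
  -- For each point of D choose an element of S above it.
  have hc : ∀ d : D, ∃ s : S, d ≤ (s : D) := by
    intro d
    obtain ⟨b, hbS, hb⟩ := hSunb d
    exact ⟨⟨b, hbS⟩, hb⟩
  choose c hcle using hc
  -- The "column" of each new point.
  set col : D → Set X := fun d => ((e (c d) : ↥𝒰) : Set X) with hcol
  have hcol𝒰 : ∀ d, col d ∈ 𝒰 := fun d => (e (c d)).2
  have hcolopen : ∀ d, IsOpen (col d) := fun d => h𝒰open _ (hcol𝒰 d)
  have hcolne : ∀ d, (col d).Nonempty := fun d => h𝒰ne _ (hcol𝒰 d)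
  -- fibers of col are small
  have hfiber : ∀ d0 : D, #{d : D | col d = col d0} < κ := by
    intro d0
    have hsub : {d : D | col d = col d0} ⊆ Set.Iic ((c d0 : D)) := by
      intro d hd
      have : e (c d) = e (c d0) := Subtype.ext hd
      have : c d = c d0 := e.injective this
      calc d ≤ (c d : D) := hcle d
        _ = (c d0 : D) := by rw [this]
    refine (mk_le_mk_of_subset hsub).trans_lt ?_
    have h1 : (Set.Iic ((c d0 : D)) : Set D) ⊆ Set.Iio ((c d0 : D)) ∪ {(c d0 : D)} := by
      intro x hx
      have hx' : x ≤ ((c d0 : D)) := hx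
      rcases hx'.lt_or_eq with h' | h'
      · exact Or.inl h'
      · exact Or.inr h'
    refine (mk_le_mk_of_subset h1).trans_lt ?_
    refine (mk_union_le _ _).trans_lt ?_
    have h2 : #(Set.Iio ((c d0 : D))) < κ := Cardinal.mk_Iio_ord_toType _
    have h3 : #({(c d0 : D)} : Set D) < κ := by
      rw [mk_singleton]
      exact one_lt_aleph0.trans_le hκ
    exact Cardinal.add_lt_of_lt hκ h2 h3
  -- The topology on Y = X ⊕ D.
  let t : TopologicalSpace (X ⊕ D) :=
    { IsOpen := fun O => IsOpen (Sum.inl ⁻¹' O) ∧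
        ∀ d : D, Sum.inr d ∈ O → col d ⊆ Sum.inl ⁻¹' O
      isOpen_univ := ⟨isOpen_univ, fun _ _ => subset_univ _⟩
      isOpen_inter := by
        rintro O₁ O₂ ⟨hO₁, hd₁⟩ ⟨hO₂, hd₂⟩
        exact ⟨hO₁.inter hO₂, fun d hd =>
          subset_inter (hd₁ d hd.1) (hd₂ d hd.2)⟩
      isOpen_sUnion := by
        intro 𝒮 h𝒮
        constructor
        · rw [preimage_sUnion]
          exact isOpen_biUnion fun O hO => (h𝒮 O hO).1
        · rintro d ⟨O, hO, hdO⟩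
          refine ((h𝒮 O hO).2 d hdO).trans ?_
          exact preimage_mono (subset_sUnion_of_mem hO) }
  refine ⟨X ⊕ D, t, Sum.inl, ?_, ?_⟩ <;> letI : TopologicalSpace (X ⊕ D) := t
  · -- dense embedding
    have hind : Topology.IsInducing (Sum.inl : X → X ⊕ D) := by
      refine ⟨TopologicalSpace.ext_iff.mpr fun U => ?_⟩
      constructor
      · intro hU
        rw [isOpen_induced_iff]
        refine ⟨Sum.inl '' U ∪ Sum.inr '' {d | col d ⊆ U}, ⟨?_, ?_⟩, ?_⟩
        · have : Sum.inl ⁻¹' (Sum.inl '' U ∪ Sum.inr '' {d | col d ⊆ U}) = U := by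
            ext x
            simp [Sum.inl_injective.eq_iff]
          rw [this]; exact hU
        · rintro d (⟨x, _, hx⟩ | ⟨d', hd', hd⟩)
          · exact absurd hx (by simp)
          · obtain rfl : d' = d := Sum.inr_injective hd
            intro x hx
            simp only [mem_preimage, mem_union]
            exact Or.inl ⟨x, hd' hx, rfl⟩
        · ext x
          simp [Sum.inl_injective.eq_iff]
      · intro hU
        rw [isOpen_induced_iff] at hU
        obtain ⟨O, hO, rfl⟩ := hU
        exact hO.1
    have hdense : DenseRange (Sum.inl : X → X ⊕ D) := by
      rw [DenseRange, dense_iff_inter_open]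
      rintro O hO ⟨y, hy⟩
      rcases y with x | d
      · exact ⟨Sum.inl x, hy, mem_range_self x⟩
      · obtain ⟨x, hx⟩ := hcolne d
        exact ⟨Sum.inl x, hO.2 d hy hx, mem_range_self x⟩
    exact ⟨⟨hind, hdense⟩, Sum.inl_injective⟩
  · -- κ is not a caliber* for Y
    intro hcal
    set V : D → Set (X ⊕ D) := fun d => Sum.inl '' col d ∪ {Sum.inr d} with hV
    have hVinj : Function.Injective V := by
      intro d d' hdd
      have : Sum.inr d ∈ V d' := hdd ▸ (Or.inr rfl)
      rcases this with ⟨x, _, hx⟩ | h'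
      · exact absurd hx (by simp)
      · exact Sum.inr_injective h'
    have hVpre : ∀ d, Sum.inl ⁻¹' V d = col d := by
      intro d
      ext x
      simp [V, Sum.inl_injective.eq_iff]
    obtain ⟨𝒲, h𝒲sub, h𝒲card, y, hy⟩ :=
      hcal (Set.range V) (by rw [mk_range_eq _ hVinj, hD, Cardinal.mk_ord_toType])
        (by
          rintro _ ⟨d, rfl⟩
          refine ⟨by rw [hVpre]; exact hcolopen d, ?_⟩
          rintro d' hd'
          rcases hd' with ⟨x, _, hx⟩ | h'
          · exact absurd hx (by simp)
          · obtain rfl : d' = d := Sum.inr_injective h'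
            rw [hVpre])
        (by rintro _ ⟨d, rfl⟩; exact ⟨Sum.inr d, Or.inr rfl⟩)
    set T : Set D := {d | V d ∈ 𝒲} with hT
    have h𝒲T : 𝒲 = V '' T := by
      ext W
      constructor
      · intro hW
        obtain ⟨d, rfl⟩ := h𝒲sub hW
        exact ⟨d, hW, rfl⟩
      · rintro ⟨d, hd, rfl⟩
        exact hd
    have hTcard : #T = κ := by
      rw [← h𝒲card, h𝒲T, mk_image_eq hVinj]
    have hκ1 : (1 : Cardinal) < κ := one_lt_aleph0.trans_le hκ
    rcases y with x | d0
    · -- the common point is in X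
      have hxcol : ∀ d ∈ T, x ∈ col d := by
        intro d hd
        have : Sum.inl x ∈ V d := hy _ hd
        rcases this with ⟨x', hx', hxx⟩ | h'
        · obtain rfl : x' = x := Sum.inl_injective hxx
          exact hx'
        · exact absurd (mem_singleton_iff.mp h') (by simp)
      set A : Set (Set X) := col '' T with hA
      have hA𝒰 : A ⊆ 𝒰 := by rintro _ ⟨d, _, rfl⟩; exact hcol𝒰 d
      have hAle : #A ≤ κ.ord.cof := h𝒰card ▸ mk_le_mk_of_subset hA𝒰
      have hAge : κ.ord.cof ≤ #A := by
        by_contra h'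
        push_neg at h'
        -- T is contained in the union of fibers over A, each of size < κ
        have hTsub : T ⊆ ⋃ U ∈ A, {d : D | col d = U} := by
          intro d hd
          exact mem_biUnion ⟨d, hd, rfl⟩ rfl
        have hTle : #T ≤ #A * ⨆ U : A, #{d : D | col d = (U : Set X)} :=
          (mk_le_mk_of_subset hTsub).trans (mk_biUnion_le _ _)
        have hsup : (⨆ U : A, #{d : D | col d = (U : Set X)}) < κ := by
          refine Ordinal.iSup_lt h' ?_
          rintro ⟨U, hU⟩
          obtain ⟨d0, _, rfl⟩ := hU
          exact hfiber d0
        have hAlt : #A < κ := h'.trans_le (Ordinal.cof_ord_le κ)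
        have : #T < κ := hTle.trans_lt (Cardinal.mul_lt_of_lt hκ hAlt hsup)
        rw [hTcard] at this
        exact lt_irrefl κ this
      have hAcard : #A = κ.ord.cof := le_antisymm hAle hAge
      have hxA : x ∈ ⋂₀ A := by
        rintro _ ⟨d, hd, rfl⟩
        exact hxcol d hd
      rw [hbad A hA𝒰 hAcard] at hxA
      exact hxA
    · -- the common point is a new point: T has at most one element
      have hTsub : T ⊆ {d0} := by
        intro d hd
        have : Sum.inr d0 ∈ V d := hy _ hd
        rcases this with ⟨x', _, hx⟩ | h'
        · exact absurd hx (by simp)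
        · exact (Sum.inr_injective h').symm
      have : #T ≤ 1 := by
        refine (mk_le_mk_of_subset hTsub).trans ?_
        rw [mk_singleton]
      rw [hTcard] at this
      exact absurd this (not_le.mpr hκ1)
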